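/- Let A and B be real symmetric positive definite d×d matrices with A − B positive semidefinite. Then for every x ∈ ℝ^d, √(xᵀ A x) ≤ √(xᵀ B x) · √(det(A)/det(B)). -/

import Mathlib

open scoped Matrix
open Matrix Finset

lemma quad_le_det_mul (d : ℕ) (M : Matrix (Fin d) (Fin d) ℝ) (hM : M.IsHermitian)
    (h1 : (M - 1).PosSemidef) (y : Fin d → ℝ) :
    y ⬝ᵥ M *ᵥ y ≤ M.det * (y ⬝ᵥ y) := by
  classical
  set U : Matrix (Fin d) (Fin d) ℝ := (hM.eigenvectorUnitary : Matrix (Fin d) (Fin d) ℝ) with hU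
  set z : Fin d → ℝ := star U *ᵥ y with hz
  have hstar : star U = Uᵀ := by
    ext i j; simp [Matrix.star_apply]
  have hzy : z = y ᵥ* U := by rw [hz, hstar, mulVec_transpose]
  have hUU : U * star U = 1 := (Matrix.mem_unitaryGroup_iff).mp hM.eigenvectorUnitary.2
  -- eigenvalues ≥ 1
  have heig : ∀ i, 1 ≤ hM.eigenvalues i := by
    intro i
    set v : Fin d → ℝ := ⇑(hM.eigenvectorBasis i) with hv
    have hMv : M *ᵥ v = hM.eigenvalues i • v := hM.mulVec_eigenvectorBasis i
    have hvv : v ⬝ᵥ v = 1 := by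
      have hnorm : ‖hM.eigenvectorBasis i‖ = 1 := hM.eigenvectorBasis.orthonormal.1 i
      have : (inner ℝ (hM.eigenvectorBasis i) (hM.eigenvectorBasis i) : ℝ) = 1 := by
        rw [real_inner_self_eq_norm_sq, hnorm]; norm_num
      rw [EuclideanSpace.inner_eq_star_dotProduct, star_trivial] at this
      exact this
    have h0 := h1.dotProduct_mulVec_nonneg v
    simp only [sub_mulVec, one_mulVec, dotProduct_sub, hMv, dotProduct_smul, smul_eq_mul,
      hvv, mul_one, RCLike.re_to_real, star_trivial] at h0
    linarith
  -- expand the quadratic form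
  have hexp : y ⬝ᵥ M *ᵥ y = ∑ i, hM.eigenvalues i * (z i) ^ 2 := by
    conv_lhs => rw [hM.spectral_theorem, Unitary.conjStarAlgAut_apply]
    rw [← hU, ← mulVec_mulVec, ← mulVec_mulVec, ← hz, dotProduct_mulVec, ← hzy]
    simp [dotProduct, Matrix.mulVec_diagonal, Function.comp, pow_two]
    ring_nf
    exact Finset.sum_congr rfl fun i _ => by ring
  have hyy : y ⬝ᵥ y = ∑ i, (z i) ^ 2 := by
    have : z ⬝ᵥ z = y ⬝ᵥ y := by
      conv_lhs => rw [hzy, ← dotProduct_mulVec, ← mulVec_transpose, ← hstar, mulVec_mulVec, hUU, one_mulVec]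
    rw [← this]
    simp [dotProduct, pow_two]
  have hdet : M.det = ∏ i, hM.eigenvalues i := by
    have := hM.det_eq_prod_eigenvalues
    simpa using this
  rw [hexp, hyy, hdet, Finset.mul_sum]
  apply Finset.sum_le_sum
  intro i _
  have h1i : hM.eigenvalues i ≤ ∏ j, hM.eigenvalues j := by
    rw [← Finset.mul_prod_erase Finset.univ _ (Finset.mem_univ i)]
    have hrest : (1:ℝ) ≤ ∏ j ∈ Finset.univ.erase i, hM.eigenvalues j := by
      apply Finset.prod_le_prod (fun j _ => zero_le_one) (fun j _ => heig j) |>.trans_eq' (by simp)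
    nlinarith [heig i]
  exact mul_le_mul_of_nonneg_right h1i (sq_nonneg _)

open scoped MatrixOrder in
lemma exists_sqrt_psd (d : ℕ) (B : Matrix (Fin d) (Fin d) ℝ) (hB : B.PosSemidef) :
    ∃ S : Matrix (Fin d) (Fin d) ℝ, S.PosSemidef ∧ S * S = B :=
  ⟨CFC.sqrt B, (CFC.sqrt_nonneg B).posSemidef, CFC.sqrt_mul_sqrt_self B hB.nonneg⟩

/-- Determinant-ratio norm comparison (Lemma 12 of Abbasi-Yadkori et al.): if `A ⪰ B ≻ 0`
then `‖x‖_A ≤ ‖x‖_B · √(det A / det B)` for every vector `x`. -/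
theorem norm_comparison (d : ℕ) (A B : Matrix (Fin d) (Fin d) ℝ)
    (hA : A.PosDef) (hB : B.PosDef) (hAB : (A - B).PosSemidef) (x : Fin d → ℝ) :
    Real.sqrt (x ⬝ᵥ A *ᵥ x) ≤ Real.sqrt (x ⬝ᵥ B *ᵥ x) * Real.sqrt (A.det / B.det) := by
  classical
  obtain ⟨S, hSps, hSS⟩ := exists_sqrt_psd d B hB.posSemidef
  have hdetS : S.det ≠ 0 := by
    intro h
    have : S.det * S.det = B.det := by rw [← Matrix.det_mul, hSS]
    rw [h, mul_zero] at this
    exact hB.det_pos.ne this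
  have hSunit : IsUnit S.det := isUnit_iff_ne_zero.mpr hdetS
  have hSinv : S⁻¹ * S = 1 := Matrix.nonsing_inv_mul S hSunit
  have hSinv' : S * S⁻¹ = 1 := Matrix.mul_nonsing_inv S hSunit
  have hSh : S⁻¹.IsHermitian := hSps.1.inv
  have hSt : Sᵀ = S := by
    have := hSps.1
    rw [Matrix.IsHermitian] at this
    conv_rhs => rw [← this]
    ext i j; simp [Matrix.conjTranspose_apply]
  set M := S⁻¹ * A * S⁻¹ with hM
  have hMh : M.IsHermitian := by
    rw [Matrix.IsHermitian, hM]
    simp only [Matrix.conjTranspose_mul, hSh.eq, hA.1.eq, Matrix.mul_assoc]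
  have hM1 : (M - 1).PosSemidef := by
    have key : M - 1 = (S⁻¹)ᴴ * (A - B) * S⁻¹ := by
      rw [hSh.eq, hM, Matrix.mul_sub, Matrix.sub_mul]
      congr 1
      rw [← hSS, ← Matrix.mul_assoc, hSinv, Matrix.one_mul, hSinv']
    rw [key]
    exact hAB.conjTranspose_mul_mul_same _
  have hA' : A = S * M * S := by
    rw [hM]
    simp only [← Matrix.mul_assoc]
    rw [hSinv', Matrix.one_mul, Matrix.mul_assoc, hSinv, Matrix.mul_one]
  set y : Fin d → ℝ := S *ᵥ x with hy
  have hxA : x ⬝ᵥ A *ᵥ x = y ⬝ᵥ M *ᵥ y := by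
    conv_lhs => rw [hA']
    rw [← Matrix.mulVec_mulVec, ← Matrix.mulVec_mulVec, Matrix.dotProduct_mulVec, hy,
      ← Matrix.mulVec_transpose, hSt]
  have hxB : y ⬝ᵥ y = x ⬝ᵥ B *ᵥ x := by
    conv_lhs => rw [hy, Matrix.dotProduct_mulVec, ← Matrix.mulVec_transpose, hSt,
      Matrix.mulVec_mulVec, hSS]
    exact dotProduct_comm _ _
  have hdetM : M.det = A.det / B.det := by
    have hB' : S.det * S.det = B.det := by rw [← Matrix.det_mul, hSS]
    rw [hM, Matrix.det_mul, Matrix.det_mul, Matrix.det_nonsing_inv, ← hB']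
    rw [Ring.inverse_eq_inv']
    field_simp
  have hle : x ⬝ᵥ A *ᵥ x ≤ (x ⬝ᵥ B *ᵥ x) * (A.det / B.det) := by
    rw [hxA, ← hxB, ← hdetM, mul_comm]
    exact quad_le_det_mul d M hMh hM1 y
  have hBnn : 0 ≤ x ⬝ᵥ B *ᵥ x := by
    have := hB.posSemidef.dotProduct_mulVec_nonneg x
    simpa using this
  calc Real.sqrt (x ⬝ᵥ A *ᵥ x) ≤ Real.sqrt ((x ⬝ᵥ B *ᵥ x) * (A.det / B.det)) :=
        Real.sqrt_le_sqrt hle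
    _ = Real.sqrt (x ⬝ᵥ B *ᵥ x) * Real.sqrt (A.det / B.det) := Real.sqrt_mul hBnn _
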